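/- Let E be a complex Hilbert space, let U be a unitary continuous linear operator on E, let P be the orthogonal projection onto a closed subspace K of E, set Q = 1 − P, and let ψ ∈ E with ‖ψ‖ = 1. For every natural number T, ∑_{t=1}^{T} ‖P (U ((Q ∘ U)^{t−1} ψ))‖² = 1 if and only if (Q ∘ U)^{T} ψ = 0. (This characterizes the paper's notion that a QTM with unitary time evolution U, final-state projection P_F = P, and initial configuration |c₀⟩ = ψ halts within time T, i.e., that its halting probabilities p(t) = ‖P U (Q U)^{t−1} ψ‖² satisfy ∑_{t=1}^{T} p(t) = 1.) -/

import Mathlib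

/-- Characterisation of halting within time `T`: for a unit initial state `ψ`,
`∑_{t=1}^{T} ‖P (U ((Q∘U)^{t−1} ψ))‖² = 1` iff `(Q∘U)^T ψ = 0`. -/
theorem stmt5 {E : Type*} [NormedAddCommGroup E] [InnerProductSpace ℂ E] [CompleteSpace E]
    (U : E →L[ℂ] E) (hU : U ∈ unitary (E →L[ℂ] E))
    (K : Submodule ℂ E) [K.HasOrthogonalProjection]
    (P Q : E →L[ℂ] E)
    (hP : P = K.subtypeL.comp K.orthogonalProjectionOnto)
    (hQ : Q = 1 - P)
    (ψ : E) (hψ : ‖ψ‖ = 1) (T : ℕ) :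
    (∑ t ∈ Finset.Icc 1 T, ‖P (U (((Q.comp U) ^ (t - 1)) ψ))‖ ^ 2) = 1 ↔
      ((Q.comp U) ^ T) ψ = 0 := by
  -- Pythagoras: ‖x‖² = ‖P x‖² + ‖Q x‖²
  have pyth : ∀ x : E, ‖x‖ ^ 2 = ‖P x‖ ^ 2 + ‖Q x‖ ^ 2 := by
    intro x
    have hQx : Q x = x - P x := by rw [hQ]; simp
    have hPK : P x ∈ K := by rw [hP]; exact (K.orthogonalProjectionOnto x).2
    have hQK : Q x ∈ Kᗮ := by
      rw [hQx, hP]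
      exact K.sub_starProjection_mem_orthogonal x
    have hx : x = P x + Q x := by rw [hQx]; abel
    have hinner : (inner ℂ (P x) (Q x) : ℂ) = 0 := (K.mem_orthogonal _).1 hQK _ hPK
    calc ‖x‖ ^ 2 = ‖P x + Q x‖ ^ 2 := by rw [← hx]
      _ = ‖P x‖ ^ 2 + ‖Q x‖ ^ 2 := by
          simp only [sq]
          exact norm_add_sq_eq_norm_sq_add_norm_sq_of_inner_eq_zero _ _ hinner
  set a : ℕ → ℝ := fun t => ‖((Q.comp U) ^ t) ψ‖ ^ 2 with ha
  have key : ∀ i : ℕ, ‖P (U (((Q.comp U) ^ i) ψ))‖ ^ 2 = a i - a (i + 1) := by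
    intro i
    have hnext : ((Q.comp U) ^ (i + 1)) ψ = Q (U (((Q.comp U) ^ i) ψ)) := by
      rw [pow_succ']
      simp [ContinuousLinearMap.mul_apply]
    have hnorm : ‖U (((Q.comp U) ^ i) ψ)‖ = ‖((Q.comp U) ^ i) ψ‖ :=
      U.norm_map_of_mem_unitary hU _
    have := pyth (U (((Q.comp U) ^ i) ψ))
    rw [hnorm] at this
    simp only [ha, hnext]
    linarith
  have hsum : (∑ t ∈ Finset.Icc 1 T, ‖P (U (((Q.comp U) ^ (t - 1)) ψ))‖ ^ 2)
      = a 0 - a T := by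
    rw [← Finset.Ico_add_one_right_eq_Icc, Finset.sum_Ico_eq_sum_range]
    have hT : T + 1 - 1 = T := rfl
    rw [hT]
    have : ∀ i ∈ Finset.range T, ‖P (U (((Q.comp U) ^ (1 + i - 1)) ψ))‖ ^ 2
        = a i - a (i + 1) := by
      intro i _
      have h1 : 1 + i - 1 = i := by omega
      rw [h1]; exact key i
    rw [Finset.sum_congr rfl this]
    exact Finset.sum_range_sub' a T
  have ha0 : a 0 = 1 := by simp [ha, hψ]
  rw [hsum, ha0]
  constructor
  · intro h
    have : a T = 0 := by linarith
    have : ‖((Q.comp U) ^ T) ψ‖ = 0 := by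
      have := this
      simp only [ha] at this
      exact pow_eq_zero_iff (n := 2) (by norm_num) |>.mp this
    exact norm_eq_zero.mp this
  · intro h
    simp only [ha, h]; simp
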